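/- Let Q be the quadratic form on the ℚ-vector space V = M₂(ℚ) of 2×2 rational matrices given by Q(X) = −det(X). Then the even Clifford algebra of Q is isomorphic as a ℚ-algebra to the product M₂(ℚ) × M₂(ℚ). -/

import Mathlib

open CliffordAlgebra Matrix

set_option synthInstance.maxHeartbeats 1000000
set_option maxHeartbeats 2000000

abbrev V2 := Matrix (Fin 2) (Fin 2) ℚ

noncomputable def adjL : V2 →ₗ[ℚ] V2 where
  toFun x := x.trace • (1 : V2) - x
  map_add' x y := by simp [add_smul]; abel
  map_smul' r x := by simp [smul_smul, smul_sub]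

lemma adjL_apply (x : V2) : adjL x = x.trace • 1 - x := rfl

lemma mul_adjL (x : V2) : x * adjL x = x.det • 1 := by
  ext i j
  fin_cases i <;> fin_cases j <;>
    simp [adjL_apply, mul_apply, Fin.sum_univ_two, det_fin_two, trace_fin_two,
      one_apply] <;> ring

lemma adjL_mul (x : V2) : adjL x * x = x.det • 1 := by
  ext i j
  fin_cases i <;> fin_cases j <;>
    simp [adjL_apply, mul_apply, Fin.sum_univ_two, det_fin_two, trace_fin_two,
      one_apply] <;> ring

lemma adjL_adjL (x : V2) : adjL (adjL x) = x := by
  ext i j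
  fin_cases i <;> fin_cases j <;>
    simp [adjL_apply, trace_fin_two, one_apply, Matrix.sub_apply, Matrix.smul_apply] <;> ring

lemma adjL_one : adjL (1 : V2) = 1 := by
  ext i j
  fin_cases i <;> fin_cases j <;>
    simp [adjL_apply, trace_fin_two, one_apply, Matrix.sub_apply, Matrix.smul_apply] <;> norm_num

section main
variable (Q : QuadraticForm ℚ V2) (hQ : ∀ X : V2, Q X = -X.det)

/-- the even hom into `M₂ × M₂`. -/
noncomputable def fHom : CliffordAlgebra.EvenHom Q (V2 × V2) where
  bilin := LinearMap.mk₂ ℚ (fun x y => (-(x * adjL y), -(adjL x * y)))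
    (fun x x' y => by simp [add_mul]; abel_nf; exact ⟨trivial, trivial⟩)
    (fun r x y => by simp [Prod.smul_mk])
    (fun x y y' => by simp [mul_add]; abel_nf; exact ⟨trivial, trivial⟩)
    (fun r x y => by simp [Prod.smul_mk])
  contract m := by
    simp only [LinearMap.mk₂_apply, hQ, mul_adjL, adjL_mul, Algebra.algebraMap_eq_smul_one,
      Prod.smul_mk, Prod.one_eq_mk, neg_smul, Prod.neg_mk]
  contract_mid m₁ m₂ m₃ := by
    have h1 : m₁ * adjL m₂ * (m₂ * adjL m₃) = m₂.det • (m₁ * adjL m₃) := by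
      rw [show m₁ * adjL m₂ * (m₂ * adjL m₃) = m₁ * (adjL m₂ * m₂) * adjL m₃ by
        simp only [mul_assoc], adjL_mul]
      simp [mul_smul_comm, smul_mul_assoc]
    have h2 : adjL m₁ * m₂ * (adjL m₂ * m₃) = m₂.det • (adjL m₁ * m₃) := by
      rw [show adjL m₁ * m₂ * (adjL m₂ * m₃) = adjL m₁ * (m₂ * adjL m₂) * m₃ by
        simp only [mul_assoc], mul_adjL]
      simp [mul_smul_comm, smul_mul_assoc]
    simp only [LinearMap.mk₂_apply, Prod.mk_mul_mk, neg_mul_neg, h1, h2, hQ,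
      Prod.smul_mk, smul_neg, neg_smul, neg_neg, Prod.neg_mk]
end main
lemma adjL_lit (a b c d : ℚ) : adjL !![a,b;c,d] = !![d,-b;-c,a] := by
  ext i j
  fin_cases i <;> fin_cases j <;>
    simp [adjL_apply, Matrix.trace_fin_two, Matrix.one_apply, Matrix.sub_apply,
      Matrix.smul_apply] <;> ring

section surj
variable (Q : QuadraticForm ℚ V2) (hQ : ∀ X : V2, Q X = -X.det)

noncomputable def phi : CliffordAlgebra.even Q →ₐ[ℚ] V2 × V2 := even.lift Q (fHom Q hQ)

lemma phi_bilin (x y : V2) :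
    phi Q hQ ((even.ι Q).bilin x y) = (-(x * adjL y), -(adjL x * y)) :=
  even.lift_ι Q (fHom Q hQ) x y

lemma bilin_mem (x y : V2) :
    ((-(x * adjL y), -(adjL x * y)) : V2 × V2) ∈ (phi Q hQ).range :=
  ⟨(even.ι Q).bilin x y, phi_bilin Q hQ x y⟩

lemma u_mem (m : V2) : ((m, adjL m) : V2 × V2) ∈ (phi Q hQ).range := by
  have h := neg_mem (bilin_mem Q hQ m 1)
  simpa [adjL_one] using h

lemma one_zero_mem : ((1, 0) : V2 × V2) ∈ (phi Q hQ).range := by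
  have h11 := u_mem Q hQ !![1,0;0,0]
  have h12 := u_mem Q hQ !![0,1;0,0]
  have h21 := u_mem Q hQ !![0,0;1,0]
  have e1 : adjL !![1,0;0,0] = !![0,0;0,1] := by
    ext i j; fin_cases i <;> fin_cases j <;>
      simp [adjL_apply, Matrix.trace_fin_two, Matrix.one_apply, Matrix.sub_apply,
        Matrix.smul_apply]
  have e2 : adjL !![0,1;0,0] = !![0,-1;0,0] := by
    ext i j; fin_cases i <;> fin_cases j <;>
      simp [adjL_apply, Matrix.trace_fin_two, Matrix.one_apply, Matrix.sub_apply,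
        Matrix.smul_apply]
  have e3 : adjL !![0,0;1,0] = !![0,0;-1,0] := by
    ext i j; fin_cases i <;> fin_cases j <;>
      simp [adjL_apply, Matrix.trace_fin_two, Matrix.one_apply, Matrix.sub_apply,
        Matrix.smul_apply]
  rw [e1] at h11
  rw [e2] at h12
  rw [e3] at h21
  have key : ((1,0) : V2 × V2) =
      ((!![1,0;0,0] : V2), (!![0,0;0,1] : V2)) * (!![0,1;0,0], !![0,-1;0,0]) *
        ((!![0,0;1,0], !![0,0;-1,0]) * (!![1,0;0,0], !![0,0;0,1])) +
      (!![0,0;1,0], !![0,0;-1,0]) * (!![1,0;0,0], !![0,0;0,1]) *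
        ((!![1,0;0,0], !![0,0;0,1]) * (!![0,1;0,0], !![0,-1;0,0])) := by
    refine Prod.ext ?_ ?_ <;>
      simp [Matrix.mul_fin_two, Matrix.one_fin_two] <;>
      ext i j <;> fin_cases i <;> fin_cases j <;>
        simp [Matrix.add_apply, Matrix.neg_apply, Matrix.mul_apply, Fin.sum_univ_two]
  rw [key]
  exact add_mem (mul_mem (mul_mem h11 h12) (mul_mem h21 h11))
    (mul_mem (mul_mem h21 h11) (mul_mem h11 h12))

lemma phi_surjective : Function.Surjective (phi Q hQ) := by
  rintro ⟨m, n⟩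
  have h10 := one_zero_mem Q hQ
  have h01 : ((0, 1) : V2 × V2) ∈ (phi Q hQ).range := by
    have e : ((0, 1) : V2 × V2) = 1 - (1, 0) := by
      refine Prod.ext ?_ ?_ <;> simp
    rw [e]
    exact sub_mem (one_mem _) h10
  have hun : ((adjL n, n) : V2 × V2) ∈ (phi Q hQ).range := by
    have := u_mem Q hQ (adjL n)
    rwa [adjL_adjL] at this
  have key : ((m, n) : V2 × V2) = (1, 0) * (m, adjL m) + (0, 1) * (adjL n, n) := by
    refine Prod.ext ?_ ?_ <;> simp
  exact key ▸ add_mem (mul_mem h10 (u_mem Q hQ m)) (mul_mem h01 hun)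
end surj

section span
variable (Q : QuadraticForm ℚ V2) (hQ : ∀ X : V2, Q X = -X.det)

noncomputable def g1 : V2 := !![0,1;1,0]
noncomputable def g2 : V2 := !![0,1;-1,0]
noncomputable def g3 : V2 := !![1,0;0,-1]
noncomputable def g4 : V2 := !![1,0;0,1]

/-- the 16 canonical words -/
noncomputable def wds : Fin 16 → CliffordAlgebra Q :=
  ![1, ι Q (g1), ι Q (g2), ι Q (g3), ι Q (g4),
    ι Q (g1) * ι Q (g2), ι Q (g1) * ι Q (g3), ι Q (g1) * ι Q (g4),
    ι Q (g2) * ι Q (g3), ι Q (g2) * ι Q (g4), ι Q (g3) * ι Q (g4),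
    ι Q (g1) * (ι Q (g2) * ι Q (g3)), ι Q (g1) * (ι Q (g2) * ι Q (g4)),
    ι Q (g1) * (ι Q (g3) * ι Q (g4)), ι Q (g2) * (ι Q (g3) * ι Q (g4)),
    ι Q (g1) * (ι Q (g2) * (ι Q (g3) * ι Q (g4)))]

include hQ in
lemma span_wds_eq_top : Submodule.span ℚ (Set.range (wds Q)) = ⊤ := by
  set S := Submodule.span ℚ (Set.range (wds Q)) with hS
  set a := ι Q g1 with ha
  set b := ι Q g2 with hb
  set c := ι Q g3 with hc
  set d := ι Q g4 with hd
  -- quadratic values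
  have q1 : Q g1 = 1 := by rw [hQ]; norm_num [Matrix.det_fin_two, g1]
  have q2 : Q g2 = -1 := by rw [hQ]; norm_num [Matrix.det_fin_two, g2]
  have q3 : Q g3 = 1 := by rw [hQ]; norm_num [Matrix.det_fin_two, g3]
  have q4 : Q g4 = -1 := by rw [hQ]; norm_num [Matrix.det_fin_two, g4]
  -- orthogonality
  have orth : ∀ (x y : V2), Q (x + y) = Q x + Q y → Q.IsOrtho x y := by
    intro x y h; rwa [QuadraticMap.isOrtho_def]
  have o12 : Q.IsOrtho g1 g2 := orth _ _ (by
    rw [hQ, hQ, hQ]; norm_num [Matrix.det_fin_two, Matrix.add_apply, g1, g2])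
  have o13 : Q.IsOrtho g1 g3 := orth _ _ (by
    rw [hQ, hQ, hQ]; norm_num [Matrix.det_fin_two, Matrix.add_apply, g1, g3])
  have o14 : Q.IsOrtho g1 g4 := orth _ _ (by
    rw [hQ, hQ, hQ]; norm_num [Matrix.det_fin_two, Matrix.add_apply, g1, g4])
  have o23 : Q.IsOrtho g2 g3 := orth _ _ (by
    rw [hQ, hQ, hQ]; norm_num [Matrix.det_fin_two, Matrix.add_apply, g2, g3])
  have o24 : Q.IsOrtho g2 g4 := orth _ _ (by
    rw [hQ, hQ, hQ]; norm_num [Matrix.det_fin_two, Matrix.add_apply, g2, g4])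
  have o34 : Q.IsOrtho g3 g4 := orth _ _ (by
    rw [hQ, hQ, hQ]; norm_num [Matrix.det_fin_two, Matrix.add_apply, g3, g4])
  -- rewrite rules
  have hba : b * a = -(a * b) := ι_mul_ι_comm_of_isOrtho o12.symm
  have hca : c * a = -(a * c) := ι_mul_ι_comm_of_isOrtho o13.symm
  have hda : d * a = -(a * d) := ι_mul_ι_comm_of_isOrtho o14.symm
  have hcb : c * b = -(b * c) := ι_mul_ι_comm_of_isOrtho o23.symm
  have hdb : d * b = -(b * d) := ι_mul_ι_comm_of_isOrtho o24.symm
  have hdc : d * c = -(c * d) := ι_mul_ι_comm_of_isOrtho o34.symm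
  have hba' : ∀ x, b * (a * x) = -(a * (b * x)) := fun x => by
    rw [← mul_assoc, hba, neg_mul, mul_assoc]
  have hca' : ∀ x, c * (a * x) = -(a * (c * x)) := fun x => by
    rw [← mul_assoc, hca, neg_mul, mul_assoc]
  have hda' : ∀ x, d * (a * x) = -(a * (d * x)) := fun x => by
    rw [← mul_assoc, hda, neg_mul, mul_assoc]
  have hcb' : ∀ x, c * (b * x) = -(b * (c * x)) := fun x => by
    rw [← mul_assoc, hcb, neg_mul, mul_assoc]
  have hdb' : ∀ x, d * (b * x) = -(b * (d * x)) := fun x => by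
    rw [← mul_assoc, hdb, neg_mul, mul_assoc]
  have hdc' : ∀ x, d * (c * x) = -(c * (d * x)) := fun x => by
    rw [← mul_assoc, hdc, neg_mul, mul_assoc]
  have saa : a * a = 1 := by rw [ha, ι_sq_scalar, q1, _root_.map_one]
  have sbb : b * b = -1 := by
    rw [hb, ι_sq_scalar, q2, _root_.map_neg, _root_.map_one]
  have scc : c * c = 1 := by rw [hc, ι_sq_scalar, q3, _root_.map_one]
  have sdd : d * d = -1 := by
    rw [hd, ι_sq_scalar, q4, _root_.map_neg, _root_.map_one]
  have saa' : ∀ x, a * (a * x) = x := fun x => by rw [← mul_assoc, saa, one_mul]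
  have sbb' : ∀ x, b * (b * x) = -x := fun x => by rw [← mul_assoc, sbb, neg_mul, one_mul]
  have scc' : ∀ x, c * (c * x) = x := fun x => by rw [← mul_assoc, scc, one_mul]
  have sdd' : ∀ x, d * (d * x) = -x := fun x => by rw [← mul_assoc, sdd, neg_mul, one_mul]
  -- membership of the 16 words
  have w0 : (1 : CliffordAlgebra Q) ∈ S := Submodule.subset_span ⟨0, rfl⟩
  have w1 : a ∈ S := Submodule.subset_span ⟨1, rfl⟩
  have w2 : b ∈ S := Submodule.subset_span ⟨2, rfl⟩
  have w3 : c ∈ S := Submodule.subset_span ⟨3, rfl⟩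
  have w4 : d ∈ S := Submodule.subset_span ⟨4, rfl⟩
  have w5 : a * b ∈ S := Submodule.subset_span ⟨5, rfl⟩
  have w6 : a * c ∈ S := Submodule.subset_span ⟨6, rfl⟩
  have w7 : a * d ∈ S := Submodule.subset_span ⟨7, rfl⟩
  have w8 : b * c ∈ S := Submodule.subset_span ⟨8, rfl⟩
  have w9 : b * d ∈ S := Submodule.subset_span ⟨9, rfl⟩
  have w10 : c * d ∈ S := Submodule.subset_span ⟨10, rfl⟩
  have w11 : a * (b * c) ∈ S := Submodule.subset_span ⟨11, rfl⟩
  have w12 : a * (b * d) ∈ S := Submodule.subset_span ⟨12, rfl⟩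
  have w13 : a * (c * d) ∈ S := Submodule.subset_span ⟨13, rfl⟩
  have w14 : b * (c * d) ∈ S := Submodule.subset_span ⟨14, rfl⟩
  have w15 : a * (b * (c * d)) ∈ S := Submodule.subset_span ⟨15, rfl⟩
  -- closure under right multiplication by each letter
  have step : ∀ (e : CliffordAlgebra Q), (e = a ∨ e = b ∨ e = c ∨ e = d) →
      ∀ x ∈ S, x * e ∈ S := by
    rintro e he x hx
    induction hx using Submodule.span_induction with
    | mem z hz =>
      simp only [wds, Matrix.range_cons, Matrix.range_empty, Set.union_empty,
        Set.mem_union, Set.mem_singleton_iff, ← ha, ← hb, ← hc, ← hd] at hz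
      rcases hz with rfl|rfl|rfl|rfl|rfl|rfl|rfl|rfl|rfl|rfl|rfl|rfl|rfl|rfl|rfl|rfl <;>
        rcases he with rfl | rfl | rfl | rfl <;>
        · try simp only [mul_assoc, one_mul, mul_one, hba, hca, hda, hcb, hdb, hdc,
            hba', hca', hda', hcb', hdb', hdc', saa, sbb, scc, sdd,
            saa', sbb', scc', sdd', mul_neg, neg_mul, neg_neg]
          solve_by_elim [neg_mem, w0, w1, w2, w3, w4, w5, w6, w7, w8, w9, w10,
            w11, w12, w13, w14, w15]
    | zero => simpa using S.zero_mem
    | add u v hu hv ihu ihv => simpa [add_mul] using S.add_mem ihu ihv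
    | smul r u hu ihu => simpa [smul_mul_assoc] using S.smul_mem r ihu
  -- decomposition of an arbitrary vector
  have hdecomp : ∀ m : V2, ι Q m =
      ((m 0 1 + m 1 0) / 2) • a + ((m 0 1 - m 1 0) / 2) • b +
      ((m 0 0 - m 1 1) / 2) • c + ((m 0 0 + m 1 1) / 2) • d := by
    intro m
    have hm : m = ((m 0 1 + m 1 0) / 2) • g1 + ((m 0 1 - m 1 0) / 2) • g2 +
        ((m 0 0 - m 1 1) / 2) • g3 + ((m 0 0 + m 1 1) / 2) • g4 := by
      ext i j
      fin_cases i <;> fin_cases j <;>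
        simp [g1, g2, g3, g4, Matrix.add_apply, Matrix.smul_apply] <;> ring
    rw [ha, hb, hc, hd]
    conv_lhs => rw [hm]
    simp only [map_add, _root_.map_smul]
  -- closure under right multiplication by ι Q m
  have step' : ∀ x ∈ S, ∀ m : V2, x * ι Q m ∈ S := by
    intro x hx m
    rw [hdecomp m]
    simp only [mul_add, mul_smul_comm]
    refine S.add_mem (S.add_mem (S.add_mem ?_ ?_) ?_) ?_ <;>
      exact S.smul_mem _ (step _ (by tauto) x hx)
  -- the span is everything
  have main : ∀ z : CliffordAlgebra Q, ∀ y ∈ S, y * z ∈ S := by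
    intro z
    induction z using CliffordAlgebra.induction with
    | algebraMap r =>
      intro y hy
      rw [← Algebra.commutes, ← Algebra.smul_def]
      exact S.smul_mem r hy
    | ι m => intro y hy; exact step' y hy m
    | mul z₁ z₂ ih₁ ih₂ =>
      intro y hy
      rw [← mul_assoc]
      exact ih₂ _ (ih₁ y hy)
    | add z₁ z₂ ih₁ ih₂ =>
      intro y hy
      rw [mul_add]
      exact S.add_mem (ih₁ y hy) (ih₂ y hy)
  rw [eq_top_iff]
  intro z _
  simpa using main z 1 w0

end span

section final
variable (Q : QuadraticForm ℚ V2) (hQ : ∀ X : V2, Q X = -X.det)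

include hQ in
lemma finite_clifford : Module.Finite ℚ (CliffordAlgebra Q) :=
  ⟨span_wds_eq_top Q hQ ▸ Submodule.fg_span (Set.finite_range (wds Q))⟩

include hQ in
lemma finrank_clifford_le : Module.finrank ℚ (CliffordAlgebra Q) ≤ 16 := by
  simpa using finrank_le_of_span_eq_top (span_wds_eq_top Q hQ)

include hQ in
lemma finrank_even_eq_odd :
    Module.finrank ℚ (CliffordAlgebra.evenOdd Q 0) =
      Module.finrank ℚ (CliffordAlgebra.evenOdd Q 1) := by
  have q1 : Q g1 = 1 := by rw [hQ]; norm_num [Matrix.det_fin_two, g1]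
  have hmem0 : ∀ x : evenOdd Q 0, ι Q g1 * (x : CliffordAlgebra Q) ∈ evenOdd Q 1 := by
    intro x
    have h := SetLike.mul_mem_graded (ι_mem_evenOdd_one Q g1) x.2
    have e : (1 + 0 : ZMod 2) = 1 := rfl
    rwa [e] at h
  have hmem1 : ∀ x : evenOdd Q 1, ι Q g1 * (x : CliffordAlgebra Q) ∈ evenOdd Q 0 := by
    intro x
    have h := SetLike.mul_mem_graded (ι_mem_evenOdd_one Q g1) x.2
    have e : (1 + 1 : ZMod 2) = 0 := rfl
    rwa [e] at h
  have hinv : ∀ y : CliffordAlgebra Q, ι Q g1 * (ι Q g1 * y) = y := fun y => by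
    rw [← mul_assoc, ι_sq_scalar, q1, _root_.map_one, one_mul]
  let f : evenOdd Q 0 →ₗ[ℚ] evenOdd Q 1 :=
    { toFun := fun x => ⟨ι Q g1 * x, hmem0 x⟩
      map_add' := fun x y => Subtype.ext (by simp [mul_add])
      map_smul' := fun r x => Subtype.ext (by simp [mul_smul_comm]) }
  exact LinearEquiv.finrank_eq
    { f with
      invFun := fun y => ⟨ι Q g1 * y, hmem1 y⟩
      left_inv := fun x => Subtype.ext (hinv x)
      right_inv := fun y => Subtype.ext (hinv y) }

include hQ in
lemma finrank_even_le : Module.finrank ℚ (CliffordAlgebra.evenOdd Q 0) ≤ 8 := by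
  haveI := finite_clifford Q hQ
  have h := Submodule.finrank_add_eq_of_isCompl (CliffordAlgebra.evenOdd_isCompl Q)
  rw [← finrank_even_eq_odd Q hQ] at h
  have h16 := finrank_clifford_le Q hQ
  omega

end final

/-- Let `Q` be the quadratic form on `V = M₂(ℚ)` given by `Q(X) = −det(X)`.
Then the even Clifford algebra of `Q` is isomorphic as a ℚ-algebra to `M₂(ℚ) × M₂(ℚ)`. -/
theorem even_clifford_of_neg_det_iso_prod
    (Q : QuadraticForm ℚ (Matrix (Fin 2) (Fin 2) ℚ))
    (hQ : ∀ X : Matrix (Fin 2) (Fin 2) ℚ, Q X = -X.det) :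
    Nonempty (CliffordAlgebra.even Q ≃ₐ[ℚ]
      (Matrix (Fin 2) (Fin 2) ℚ × Matrix (Fin 2) (Fin 2) ℚ)) := by
  haveI := finite_clifford Q hQ
  haveI : Module.Finite ℚ (CliffordAlgebra.evenOdd Q 0) := inferInstance
  haveI hFDeven : Module.Finite ℚ (CliffordAlgebra.even Q) :=
    (inferInstance : Module.Finite ℚ (CliffordAlgebra.evenOdd Q 0))
  have hsurj := phi_surjective Q hQ
  have h8 : Module.finrank ℚ (V2 × V2) = 8 := by
    rw [Module.finrank_prod, Module.finrank_matrix]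
    simp
  have hle : Module.finrank ℚ (CliffordAlgebra.even Q) ≤ 8 := finrank_even_le Q hQ
  have hge : (8 : ℕ) ≤ Module.finrank ℚ (CliffordAlgebra.even Q) := by
    have hr : LinearMap.range (phi Q hQ).toLinearMap = ⊤ :=
      LinearMap.range_eq_top.mpr hsurj
    have := LinearMap.finrank_range_le (phi Q hQ).toLinearMap
    rw [hr, finrank_top, h8] at this
    exact this
  have heq : Module.finrank ℚ (CliffordAlgebra.even Q) = Module.finrank ℚ (V2 × V2) := by
    rw [h8]; omega
  have hinj : Function.Injective (phi Q hQ) :=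
    (LinearMap.injective_iff_surjective_of_finrank_eq_finrank heq).mpr hsurj
  exact ⟨AlgEquiv.ofBijective (phi Q hQ) ⟨hinj, hsurj⟩⟩
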